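/- Consensus ordering: let d ≥ 2, let D ≥ 1, let γ : Fin D → Fin (n (d−1)) be injective (a selection of D slices in the last dimension), and suppose there is a nonempty set K of index vectors over the first d − 1 dimensions such that for every a : Fin D the known positions in slice γ a are exactly K (i.e., for every β over the first d − 1 coordinates, (β, γ a) ∈ Ω ↔ β ∈ K), and for all β ∈ K and all a < b, A(β, γ a) < A(β, γ b). Then for every canonical shifting solution S (for subtensor dimension k = d − 1) for (A, Ω) and every index vector β over the first d − 1 dimensions with (β, γ a) ∉ Ω for all a, the imputed values are strictly increasing: for a < b, ∑_{j < d−1} S j (β j) + S (d−1) (γ a) < ∑_{j < d−1} S j (β j) + S (d−1) (γ b). -/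

import Mathlib

open Finset

/-- `S` is a canonical shifting solution (subtensor dimension `k = d - 1`) for `(A, Ω)`:
for every dimension `j` and coordinate `v` whose known slice is nonempty, the sum of the
shifted tensor `A'(α) = A(α) - ∑ j', S j' (α j')` over that slice is zero. -/
def IsCSS {d : ℕ} {n : Fin d → ℕ} (A : (∀ j, Fin (n j)) → ℝ)
    (Ω : Finset (∀ j, Fin (n j))) (S : ∀ j, Fin (n j) → ℝ) : Prop :=
  ∀ (j : Fin d) (v : Fin (n j)),
    (Ω.filter (fun α => α j = v)).Nonempty →
    ∑ α ∈ Ω.filter (fun α => α j = v), (A α - ∑ j', S j' (α j')) = 0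

/-- `α` (an unknown entry) is fully supported w.r.t. `Ω`: there is `β` differing from `α`
in every coordinate such that every mixed vertex of the hypercube spanned by `α` and `β`,
other than `α` itself, is a known entry. -/
def FullySupported {d : ℕ} {n : Fin d → ℕ} (Ω : Finset (∀ j, Fin (n j)))
    (α : ∀ j, Fin (n j)) : Prop :=
  ∃ β : ∀ j, Fin (n j), (∀ j, β j ≠ α j) ∧
    ∀ α' : ∀ j, Fin (n j), (∀ j, α' j = α j ∨ α' j = β j) → α' ≠ α → α' ∈ Ω

/-- Consensus ordering (tensor case, `d + 1 ≥ 2` dimensions): if the slices `γ a` of the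
last dimension all have the same nonempty set `K` of known positions and are unanimously
strictly ordered on `K`, then the imputed values at any fully-unknown position `β` are
strictly increasing in the same order. -/
theorem consensus_ordering {d : ℕ} (hd : 1 ≤ d) {n : Fin (d + 1) → ℕ} (hn : ∀ j, 0 < n j)
    (A : (∀ j, Fin (n j)) → ℝ) (Ω : Finset (∀ j, Fin (n j)))
    {D : ℕ} (hD : 1 ≤ D) (γ : Fin D → Fin (n (Fin.last d))) (hγ : Function.Injective γ)
    (K : Set (∀ j : Fin d, Fin (n j.castSucc))) (hK : K.Nonempty)
    (hknown : ∀ (a : Fin D) (β : ∀ j : Fin d, Fin (n j.castSucc)),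
      (Fin.snoc β (γ a) : ∀ j, Fin (n j)) ∈ Ω ↔ β ∈ K)
    (hord : ∀ β ∈ K, ∀ a b : Fin D, a < b →
      A (Fin.snoc β (γ a)) < A (Fin.snoc β (γ b)))
    (S : ∀ j, Fin (n j) → ℝ) (hS : IsCSS A Ω S)
    (β : ∀ j : Fin d, Fin (n j.castSucc))
    (hβ : ∀ a : Fin D, (Fin.snoc β (γ a) : ∀ j, Fin (n j)) ∉ Ω) :
    ∀ a b : Fin D, a < b →
      (∑ j : Fin d, S j.castSucc (β j)) + S (Fin.last d) (γ a) <
        (∑ j : Fin d, S j.castSucc (β j)) + S (Fin.last d) (γ b) := by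

  classical
  intro a b hab
  have hKfin : K.Finite := Set.toFinite K
  set Kf := hKfin.toFinset with hKf
  have hKne : Kf.Nonempty := by
    obtain ⟨x, hx⟩ := hK; exact ⟨x, hKfin.mem_toFinset.mpr hx⟩
  have hslice : ∀ c : Fin D,
      Ω.filter (fun α => α (Fin.last d) = γ c)
        = Kf.image (fun β' => (Fin.snoc β' (γ c) : ∀ j, Fin (n j))) := by
    intro c
    ext α
    simp only [Finset.mem_filter, Finset.mem_image, hKfin.mem_toFinset]
    constructor
    · rintro ⟨hΩ, hlast⟩
      refine ⟨Fin.init α, ?_, ?_⟩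
      · refine hKfin.mem_toFinset.mpr ((hknown c (Fin.init α)).mp ?_)
        rw [← hlast, Fin.snoc_init_self]; exact hΩ
      · rw [← hlast, Fin.snoc_init_self]
    · rintro ⟨β', hβ', rfl⟩
      exact ⟨(hknown c β').mpr (hKfin.mem_toFinset.mp hβ'), Fin.snoc_last _ _⟩
  have hinj : ∀ (c : Fin D), ∀ x ∈ Kf, ∀ y ∈ Kf,
      (Fin.snoc x (γ c) : ∀ j, Fin (n j)) = Fin.snoc y (γ c) → x = y := by
    intro c x _ y _ h
    have h2 := congrArg Fin.init h
    simpa [Fin.init_snoc] using h2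
  have hsum : ∀ c : Fin D,
      ∑ β' ∈ Kf, (A (Fin.snoc β' (γ c)) - ∑ j : Fin d, S j.castSucc (β' j))
        = (Kf.card : ℝ) * S (Fin.last d) (γ c) := by
    intro c
    have hne : (Ω.filter (fun α => α (Fin.last d) = γ c)).Nonempty := by
      rw [hslice c]; exact hKne.image _
    have h0 := hS (Fin.last d) (γ c) hne
    rw [hslice c, Finset.sum_image (hinj c)] at h0
    have hrw : ∀ β' : (∀ j : Fin d, Fin (n j.castSucc)),
        ∑ j', S j' ((Fin.snoc β' (γ c) : ∀ j, Fin (n j)) j')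
          = (∑ j : Fin d, S j.castSucc (β' j)) + S (Fin.last d) (γ c) := by
      intro β'
      rw [Fin.sum_univ_castSucc]
      simp [Fin.snoc_castSucc, Fin.snoc_last]
    simp only [hrw, sub_add_eq_sub_sub] at h0
    rw [Finset.sum_sub_distrib, Finset.sum_const, nsmul_eq_mul, sub_eq_zero] at h0
    exact h0
  have hlt : ∑ β' ∈ Kf, (A (Fin.snoc β' (γ a)) - ∑ j : Fin d, S j.castSucc (β' j))
      < ∑ β' ∈ Kf, (A (Fin.snoc β' (γ b)) - ∑ j : Fin d, S j.castSucc (β' j)) := by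
    refine Finset.sum_lt_sum_of_nonempty hKne ?_
    intro β' hβ'
    have hm : β' ∈ K := hKfin.mem_toFinset.mp hβ'
    have := hord β' hm a b hab
    linarith
  rw [hsum a, hsum b] at hlt
  have hcard : (0 : ℝ) < (Kf.card : ℝ) := by
    exact_mod_cast hKne.card_pos
  have := (mul_lt_mul_iff_right₀ hcard).mp hlt
  linarith
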